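/- For every x ∈ Δ and every v ∈ ℝ^d, vᵀ c(x) v = Σ_{1 ≤ j < i ≤ d} f_{ij}(x^{−ij}) f_i(x^i) f_j(x^j) g(x) (v^i − v^j)². In particular, c(x) is a symmetric positive semidefinite matrix and c(x)𝟙 = 0, where 𝟙 = (1,…,1) ∈ ℝ^d. -/
import Mathlib


open scoped BigOperators

/-- The open unit simplex in `ℝ^d`. -/
def openSimplex (d : ℕ) : Set (Fin d → ℝ) :=
  {x | (∀ i, 0 < x i) ∧ ∑ i, x i = 1}

/-- The tractable volatility matrix field; `F i j x` models `f_{ij}(x^{-ij})`. -/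
noncomputable def cMat {d : ℕ} (g : (Fin d → ℝ) → ℝ) (f : Fin d → ℝ → ℝ)
    (F : Fin d → Fin d → (Fin d → ℝ) → ℝ) (i j : Fin d) (x : Fin d → ℝ) : ℝ :=
  if i = j then
    ∑ k ∈ Finset.univ.filter (fun k => k ≠ i), F i k x * f i (x i) * f k (x k) * g x
  else -(F i j x * f i (x i) * f j (x j) * g x)

lemma pairSum {d : ℕ} (t : Fin d → Fin d → ℝ) :
    ∑ i, ∑ j ∈ Finset.univ.erase i, t i j
      = ∑ i, ∑ j ∈ Finset.univ.filter (fun j => j < i), (t i j + t j i) := by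
  have split : ∀ i : Fin d, ∑ j ∈ Finset.univ.erase i, t i j
      = (∑ j ∈ Finset.univ.filter (fun j => j < i), t i j)
        + ∑ j ∈ Finset.univ.filter (fun j => i < j), t i j := by
    intro i
    rw [← Finset.sum_union (by
      rw [Finset.disjoint_left]
      intro a h1 h2
      simp only [Finset.mem_filter] at h1 h2
      exact absurd h2.2 (not_lt_of_gt h1.2))]
    apply Finset.sum_congr _ (fun _ _ => rfl)
    ext j
    simp only [Finset.mem_erase, Finset.mem_univ, and_true, true_and, Finset.mem_union,
      Finset.mem_filter]
    constructor
    · intro h; exact lt_or_gt_of_ne h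
    · rintro (h | h) <;> [exact ne_of_lt h; exact ne_of_gt h]
  simp_rw [split, Finset.sum_add_distrib]
  congr 1
  simp_rw [Finset.sum_filter]
  rw [Finset.sum_comm]

lemma quadForm {d : ℕ} (a : Fin d → Fin d → ℝ) (hsymm : ∀ i j, a i j = a j i)
    (v : Fin d → ℝ) :
    ∑ i, ∑ j, v i * (if i = j then ∑ k ∈ Finset.univ.filter (fun k => k ≠ i), a i k
        else -(a i j)) * v j
      = ∑ i, ∑ j ∈ Finset.univ.filter (fun j => j < i), a i j * (v i - v j) ^ 2 := by
  have inner : ∀ i : Fin d,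
      ∑ j, v i * (if i = j then ∑ k ∈ Finset.univ.filter (fun k => k ≠ i), a i k
          else -(a i j)) * v j
        = ∑ j ∈ Finset.univ.erase i, (a i j * v i * v i - a i j * v i * v j) := by
    intro i
    rw [← Finset.sum_erase_add _ _ (Finset.mem_univ i), if_pos rfl, Finset.filter_ne']
    have h1 : ∑ j ∈ Finset.univ.erase i,
        v i * (if i = j then ∑ k ∈ Finset.univ.erase i, a i k else -(a i j)) * v j
        = ∑ j ∈ Finset.univ.erase i, (-(a i j * v i * v j)) := by
      apply Finset.sum_congr rfl
      intro j hj
      rw [if_neg (fun h => (Finset.mem_erase.mp hj).1 h.symm)]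
      ring
    rw [h1]
    have h2 : v i * (∑ k ∈ Finset.univ.erase i, a i k) * v i
        = ∑ k ∈ Finset.univ.erase i, a i k * v i * v i := by
      rw [Finset.mul_sum, Finset.sum_mul]
      apply Finset.sum_congr rfl
      intro k _; ring
    rw [h2, ← Finset.sum_add_distrib]
    apply Finset.sum_congr rfl
    intro j _; ring
  simp_rw [inner]
  rw [pairSum]
  apply Finset.sum_congr rfl
  intro i _
  apply Finset.sum_congr rfl
  intro j _
  rw [hsymm j i]
  ring

theorem statement1 {d : ℕ} (hd : 2 ≤ d)
    (g : (Fin d → ℝ) → ℝ) (f : Fin d → ℝ → ℝ)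
    (F : Fin d → Fin d → (Fin d → ℝ) → ℝ)
    (hFsymm : ∀ i j, F i j = F j i)
    (hFdep : ∀ i j : Fin d, ∀ x y : Fin d → ℝ,
      (∀ k, k ≠ i → k ≠ j → x k = y k) → F i j x = F i j y)
    (hgpos : ∀ x ∈ openSimplex d, 0 < g x)
    (hfpos : ∀ i, ∀ t ∈ Set.Ioo (0:ℝ) 1, 0 < f i t)
    (hFnn : ∀ i j : Fin d, i ≠ j → ∀ x ∈ openSimplex d, 0 ≤ F i j x) :
    ∀ x ∈ openSimplex d,
      (∀ v : Fin d → ℝ,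
        ∑ i, ∑ j, v i * cMat g f F i j x * v j
          = ∑ i, ∑ j ∈ Finset.univ.filter (fun j => j < i),
              F i j x * f i (x i) * f j (x j) * g x * (v i - v j) ^ 2) ∧
      (∀ i j, cMat g f F i j x = cMat g f F j i x) ∧
      (∀ v : Fin d → ℝ, 0 ≤ ∑ i, ∑ j, v i * cMat g f F i j x * v j) ∧
      (∀ i, ∑ j, cMat g f F i j x = 0) := by
  intro x hx
  obtain ⟨hxpos, hxsum⟩ := hx
  -- each coordinate lies in (0,1)
  have hx01 : ∀ i, x i ∈ Set.Ioo (0:ℝ) 1 := by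
    intro i
    refine ⟨hxpos i, ?_⟩
    obtain ⟨k, hk⟩ := Fintype.exists_ne_of_one_lt_card (by simp; omega) i
    have hk' : k ∈ Finset.univ.erase i := Finset.mem_erase.mpr ⟨hk, Finset.mem_univ k⟩
    have hle : x k ≤ ∑ j ∈ Finset.univ.erase i, x j :=
      Finset.single_le_sum (fun j _ => (hxpos j).le) hk'
    have hsplit : x i + ∑ j ∈ Finset.univ.erase i, x j = 1 := by
      rw [Finset.add_sum_erase _ _ (Finset.mem_univ i)]
      exact hxsum
    linarith [hxpos k]
  have hsymm : ∀ i j : Fin d,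
      F i j x * f i (x i) * f j (x j) * g x = F j i x * f j (x j) * f i (x i) * g x := by
    intro i j; rw [hFsymm i j]; ring
  have hquad : ∀ v : Fin d → ℝ,
      ∑ i, ∑ j, v i * cMat g f F i j x * v j
        = ∑ i, ∑ j ∈ Finset.univ.filter (fun j => j < i),
            F i j x * f i (x i) * f j (x j) * g x * (v i - v j) ^ 2 :=
    fun v => quadForm (fun i j => F i j x * f i (x i) * f j (x j) * g x) hsymm v
  have hann : ∀ i j : Fin d, i ≠ j → 0 ≤ F i j x * f i (x i) * f j (x j) * g x := by
    intro i j hij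
    have := hFnn i j hij x ⟨hxpos, hxsum⟩
    have hfi := hfpos i (x i) (hx01 i)
    have hfj := hfpos j (x j) (hx01 j)
    have hg := hgpos x ⟨hxpos, hxsum⟩
    positivity
  refine ⟨hquad, ?_, ?_, ?_⟩
  · -- symmetry
    intro i j
    by_cases h : i = j
    · subst h; rfl
    · unfold cMat
      rw [if_neg h, if_neg (fun h' => h h'.symm)]
      rw [hsymm i j]
  · -- positive semidefinite
    intro v
    rw [hquad v]
    apply Finset.sum_nonneg
    intro i _
    apply Finset.sum_nonneg
    intro j hj
    have hij : i ≠ j := ne_of_gt (Finset.mem_filter.mp hj).2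
    exact mul_nonneg (hann i j hij) (sq_nonneg _)
  · -- rows sum to zero
    intro i
    rw [← Finset.sum_erase_add _ _ (Finset.mem_univ i)]
    have h1 : ∑ j ∈ Finset.univ.erase i, cMat g f F i j x
        = ∑ j ∈ Finset.univ.erase i, (-(F i j x * f i (x i) * f j (x j) * g x)) := by
      apply Finset.sum_congr rfl
      intro j hj
      unfold cMat
      rw [if_neg (fun h => (Finset.mem_erase.mp hj).1 h.symm)]
    have h2 : cMat g f F i i x
        = ∑ j ∈ Finset.univ.erase i, F i j x * f i (x i) * f j (x j) * g x := by
      unfold cMat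
      rw [if_pos rfl, Finset.filter_ne']
    rw [h1, h2, Finset.sum_neg_distrib]
    ring
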